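/- For 0 < s and n ≥ 2, the integral I = ∫_0^{1−1/n} dy/(1−y^{s+1}) satisfies I ≤ 1 + (1/(s+1))|ln(1 − (1−1/n)^{s+1})|, and for n ≥ (s+1)/2 this gives I ≤ ln n/(s+1) + 1. -/

import Mathlib

open Real intervalIntegral

private lemma cont_rpow (p : ℝ) (hp : 0 < p) : Continuous (fun y : ℝ => y ^ p) := by
  rw [continuous_iff_continuousAt]
  intro y
  exact Real.continuousAt_rpow_const y p (Or.inr hp.le)

/-- The integral `I = ∫_0^{1−1/n} dy/(1−y^{s+1})` satisfies
`I ≤ 1 + (1/(s+1))|ln(1 − (1−1/n)^{s+1})|`, and for `n ≥ (s+1)/2` this gives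
`I ≤ ln n/(s+1) + 1`. -/
theorem integral_bound (s : ℝ) (hs : 0 < s) (n : ℕ) (hn : 2 ≤ n) :
    ((∫ y in (0 : ℝ)..(1 - 1 / n), 1 / (1 - y ^ (s + 1)))
        ≤ 1 + (1 / (s + 1)) * |Real.log (1 - (1 - 1 / (n : ℝ)) ^ (s + 1))|) ∧
    ((s + 1) / 2 ≤ (n : ℝ) →
      (∫ y in (0 : ℝ)..(1 - 1 / n), 1 / (1 - y ^ (s + 1)))
        ≤ Real.log n / (s + 1) + 1) := by
  have hn2 : (2 : ℝ) ≤ (n : ℝ) := by exact_mod_cast hn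
  have hnpos : (0 : ℝ) < (n : ℝ) := by linarith
  set x : ℝ := 1 - 1 / n with hxdef
  have hinv : 0 < 1 / (n : ℝ) := by positivity
  have hinv2 : 1 / (n : ℝ) ≤ 1 / 2 := by
    rw [div_le_div_iff₀ hnpos (by norm_num)]; linarith
  have hx0 : 0 < x := by simp only [hxdef]; linarith
  have hx1 : x < 1 := by simp only [hxdef]; linarith
  have hs1 : (0 : ℝ) < s + 1 := by linarith
  -- denominator positive on [0, x]
  have hden : ∀ y ∈ Set.Icc (0 : ℝ) x, 0 < 1 - y ^ (s + 1) := by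
    intro y hy
    have h1 : y ^ (s + 1) ≤ x ^ (s + 1) :=
      Real.rpow_le_rpow hy.1 hy.2 (le_of_lt hs1)
    have h2 : x ^ (s + 1) < 1 := Real.rpow_lt_one hx0.le hx1 hs1
    linarith
  have huIcc : Set.uIcc (0 : ℝ) x = Set.Icc 0 x := Set.uIcc_of_le hx0.le
  -- continuity
  have hcont1 : ContinuousOn (fun y : ℝ => 1 / (1 - y ^ (s + 1))) (Set.Icc 0 x) := by
    apply ContinuousOn.div continuousOn_const
    · exact (continuous_const.sub (cont_rpow (s + 1) hs1)).continuousOn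
    · intro y hy; exact (hden y hy).ne'
  have hcont2 : ContinuousOn (fun y : ℝ => y ^ s / (1 - y ^ (s + 1))) (Set.Icc 0 x) := by
    apply ContinuousOn.div (cont_rpow s hs).continuousOn
    · exact (continuous_const.sub (cont_rpow (s + 1) hs1)).continuousOn
    · intro y hy; exact (hden y hy).ne'
  have hint1 : IntervalIntegrable (fun y : ℝ => 1 / (1 - y ^ (s + 1))) MeasureTheory.volume 0 x := by
    apply ContinuousOn.intervalIntegrable; rwa [huIcc]
  have hint2 : IntervalIntegrable (fun y : ℝ => y ^ s / (1 - y ^ (s + 1))) MeasureTheory.volume 0 x := by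
    apply ContinuousOn.intervalIntegrable; rwa [huIcc]
  -- FTC: exact value of the second integral
  have hFTC : (∫ y in (0:ℝ)..x, y ^ s / (1 - y ^ (s + 1)))
      = -(1 / (s + 1)) * Real.log (1 - x ^ (s + 1)) := by
    have key : ∀ y ∈ Set.uIcc (0:ℝ) x,
        HasDerivAt (fun y : ℝ => -(1 / (s + 1)) * Real.log (1 - y ^ (s + 1)))
          (y ^ s / (1 - y ^ (s + 1))) y := by
      intro y hy
      rw [huIcc] at hy
      have hd := hden y hy
      have h1 : HasDerivAt (fun y : ℝ => y ^ (s + 1)) ((s + 1) * y ^ s) y := by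
        have := Real.hasDerivAt_rpow_const (x := y) (p := s + 1) (Or.inr (by linarith))
        simpa using this
      have h2 : HasDerivAt (fun y : ℝ => 1 - y ^ (s + 1)) (-((s + 1) * y ^ s)) y :=
        h1.const_sub 1
      have h3 : HasDerivAt (fun y : ℝ => Real.log (1 - y ^ (s + 1)))
          (-((s + 1) * y ^ s) / (1 - y ^ (s + 1))) y := h2.log hd.ne'
      have h4 := h3.const_mul (-(1 / (s + 1)))
      convert h4 using 1
      · rfl
      · rfl
      have hs1' : s + 1 ≠ 0 := ne_of_gt hs1
      rw [neg_div, neg_mul_neg, ← mul_div_assoc, ← mul_assoc, one_div, inv_mul_cancel₀ hs1', one_mul]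
    have := intervalIntegral.integral_eq_sub_of_hasDerivAt key hint2
    rw [this]
    have h0 : (0:ℝ) ^ (s + 1) = 0 := Real.zero_rpow (by linarith)
    simp [h0]
  have hlogle : Real.log (1 - x ^ (s + 1)) ≤ 0 := by
    have h1 : 0 ≤ x ^ (s + 1) := Real.rpow_nonneg hx0.le _
    have h2 : x ^ (s + 1) < 1 := Real.rpow_lt_one hx0.le hx1 hs1
    exact Real.log_nonpos (by linarith) (by linarith)
  have habs : |Real.log (1 - x ^ (s + 1))| = -Real.log (1 - x ^ (s + 1)) :=
    abs_of_nonpos hlogle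
  -- pointwise bound and main estimate
  have hmain : (∫ y in (0:ℝ)..x, 1 / (1 - y ^ (s + 1)))
      ≤ 1 + (1 / (s + 1)) * |Real.log (1 - x ^ (s + 1))| := by
    have hle : (∫ y in (0:ℝ)..x, 1 / (1 - y ^ (s + 1)))
        ≤ ∫ y in (0:ℝ)..x, (1 + y ^ s / (1 - y ^ (s + 1))) := by
      apply intervalIntegral.integral_mono_on hx0.le hint1
        (intervalIntegrable_const.add hint2)
      intro y hy
      have hd := hden y hy
      rw [div_le_iff₀ hd]
      have hpow : y ^ (s + 1) ≤ y ^ s := by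
        rcases eq_or_lt_of_le hy.1 with h | h
        · rw [← h, Real.zero_rpow (by linarith : s + 1 ≠ 0),
            Real.zero_rpow hs.ne']
        · exact Real.rpow_le_rpow_of_exponent_ge h (le_of_lt (lt_of_le_of_lt hy.2 hx1))
            (by linarith)
      have hys : 0 ≤ y ^ s := Real.rpow_nonneg hy.1 _
      rw [add_mul, one_mul, div_mul_cancel₀ _ hd.ne']
      linarith
    have heq : (∫ y in (0:ℝ)..x, (1 + y ^ s / (1 - y ^ (s + 1))))
        = x + -(1 / (s + 1)) * Real.log (1 - x ^ (s + 1)) := by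
      rw [intervalIntegral.integral_add intervalIntegrable_const hint2, hFTC]
      simp
    rw [heq] at hle
    rw [habs]
    linarith
  constructor
  · exact hmain
  · intro _
    have hxpow : x ^ (s + 1) ≤ x := by
      calc x ^ (s + 1) ≤ x ^ (1:ℝ) :=
            Real.rpow_le_rpow_of_exponent_ge hx0 hx1.le (by linarith)
        _ = x := Real.rpow_one x
    have h1n : 1 / (n : ℝ) ≤ 1 - x ^ (s + 1) := by
      simp only [hxdef] at hxpow ⊢; linarith
    have hlog2 : -Real.log (1 - x ^ (s + 1)) ≤ Real.log n := by
      have := Real.log_le_log hinv h1n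
      rw [Real.log_div one_ne_zero hnpos.ne', Real.log_one] at this
      linarith
    have : (1 / (s + 1)) * |Real.log (1 - x ^ (s + 1))| ≤ Real.log n / (s + 1) := by
      calc (1 / (s + 1)) * |Real.log (1 - x ^ (s + 1))|
          = -Real.log (1 - x ^ (s + 1)) / (s + 1) := by rw [habs]; ring
        _ ≤ Real.log n / (s + 1) := by gcongr
    linarith
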